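/- Let q ≡ 3 (mod 4) be a prime power, H = SL(2,q), and Δ the set of orbits of the group of nonzero-square scalar matrices on F_q² \ {0}. Then the stabilizer in H of the point [1,0] ∈ Δ is the group of lower-triangular matrices with diagonal entries (x², x⁻²) for x ∈ F_q nonzero, and this stabilizer has exactly 4 orbits on Δ, of sizes 1, 1, q, and q. -/

import Mathlib

namespace SL2AuxOrb
variable {F : Type*} [Field F]

def Ov (v : Fin 2 → F) : Set (Fin 2 → F) := {w | ∃ x : F, x ≠ 0 ∧ x ^ 2 • v = w}

lemma mem_Ov_self (v : Fin 2 → F) : v ∈ Ov v := ⟨1, one_ne_zero, by simp⟩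

lemma Ov_smul {x : F} (hx : x ≠ 0) (v : Fin 2 → F) : Ov (x ^ 2 • v) = Ov v := by
  ext w
  constructor
  · rintro ⟨z, hz, rfl⟩
    exact ⟨z * x, mul_ne_zero hz hx, by rw [mul_pow, mul_smul]⟩
  · rintro ⟨z, hz, rfl⟩
    refine ⟨z / x, div_ne_zero hz hx, ?_⟩
    rw [div_pow, smul_smul, div_mul_cancel₀]
    exact pow_ne_zero 2 hx

lemma Ov_eq_of (v w : Fin 2 → F) (x : F) (hx : x ≠ 0) (h : x ^ 2 • v = w) : Ov v = Ov w := by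
  subst h; exact (Ov_smul hx v).symm

lemma Ov_eq_iff (v w : Fin 2 → F) : Ov v = Ov w ↔ ∃ x : F, x ≠ 0 ∧ x ^ 2 • v = w := by
  constructor
  · intro h
    have := mem_Ov_self w
    rw [← h] at this
    exact this
  · rintro ⟨x, hx, h⟩; exact Ov_eq_of v w x hx h

lemma vecMul_fin2 (a b p q r s : F) :
    Matrix.vecMul ![a, b] !![p, q; r, s] = ![a * p + b * r, a * q + b * s] := by
  funext i; fin_cases i <;> simp [Matrix.vecMul, dotProduct, Fin.sum_univ_two]

lemma smul_fin2 (x a b : F) : x • ![a, b] = ![x * a, x * b] := by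
  funext i; fin_cases i <;> simp

lemma fin2_eq_iff {a b c d : F} : ![a, b] = ![c, d] ↔ a = c ∧ b = d := by
  constructor
  · intro h
    exact ⟨by simpa using congrFun h 0, by simpa using congrFun h 1⟩
  · rintro ⟨rfl, rfl⟩; rfl

lemma fin2_ne_zero_left {a b : F} (ha : a ≠ 0) : ![a, b] ≠ 0 := by
  intro h
  exact ha (by simpa using congrFun h 0)

lemma fin2_ne_zero_right {a b : F} (hb : b ≠ 0) : ![a, b] ≠ 0 := by
  intro h
  exact hb (by simpa using congrFun h 1)

lemma image_Ov (g : Matrix (Fin 2) (Fin 2) F) (v : Fin 2 → F) :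
    (fun u => Matrix.vecMul u g) '' Ov v = Ov (Matrix.vecMul v g) := by
  ext w
  simp only [Set.mem_image, Ov, Set.mem_setOf_eq]
  constructor
  · rintro ⟨u, ⟨x, hx, rfl⟩, rfl⟩
    exact ⟨x, hx, by rw [Matrix.smul_vecMul]⟩
  · rintro ⟨x, hx, rfl⟩
    exact ⟨x ^ 2 • v, ⟨x, hx, rfl⟩, by rw [Matrix.smul_vecMul]⟩

lemma Ov_snd' (A s : F) (hs : s ≠ 0) : Ov ![A, s ^ 2] = Ov ![A * (s ^ 2)⁻¹, 1] := by
  refine Ov_eq_of _ _ s⁻¹ (inv_ne_zero hs) ?_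
  rw [smul_fin2, fin2_eq_iff]
  constructor <;> field_simp <;> ring

lemma Ov_snd'' (A s : F) (hs : s ≠ 0) : Ov ![A, -s ^ 2] = Ov ![A * (s ^ 2)⁻¹, -1] := by
  refine Ov_eq_of _ _ s⁻¹ (inv_ne_zero hs) ?_
  rw [smul_fin2, fin2_eq_iff]
  constructor <;> field_simp <;> ring

end SL2AuxOrb

open SL2AuxOrb in
theorem SL2_stabilizer_of_point_and_orbits (F : Type*) [Field F] [Fintype F]
    [DecidableEq F] (hq : Fintype.card F % 4 = 3) :
    let O : (Fin 2 → F) → Set (Fin 2 → F) := fun v => {w | ∃ x : F, x ≠ 0 ∧ x ^ 2 • v = w}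
    let Δ : Set (Set (Fin 2 → F)) := {S | ∃ v : Fin 2 → F, v ≠ 0 ∧ S = O v}
    let act : Matrix.SpecialLinearGroup (Fin 2) F → Set (Fin 2 → F) → Set (Fin 2 → F) :=
      fun g S => (fun v => Matrix.vecMul v (g : Matrix (Fin 2) (Fin 2) F)) '' S
    let Stab : Set (Matrix.SpecialLinearGroup (Fin 2) F) := {g | act g (O ![1, 0]) = O ![1, 0]}
    (∀ g : Matrix.SpecialLinearGroup (Fin 2) F,
        g ∈ Stab ↔ ∃ x y : F, x ≠ 0 ∧
          (g : Matrix (Fin 2) (Fin 2) F) = !![x ^ 2, 0; y, (x ^ 2)⁻¹]) ∧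
    ({T : Set (Set (Fin 2 → F)) | ∃ S ∈ Δ, T = {U | ∃ g ∈ Stab, act g S = U}} =
        {{O ![1, 0]}, {O ![-1, 0]}, {U | ∃ a : F, U = O ![a, 1]},
          {U | ∃ a : F, U = O ![a, -1]}}) ∧
    Set.ncard ({O ![1, 0]} : Set (Set (Fin 2 → F))) = 1 ∧
    Set.ncard ({O ![-1, 0]} : Set (Set (Fin 2 → F))) = 1 ∧
    Set.ncard {U : Set (Fin 2 → F) | ∃ a : F, U = O ![a, 1]} = Fintype.card F ∧
    Set.ncard {U : Set (Fin 2 → F) | ∃ a : F, U = O ![a, -1]} = Fintype.card F := by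
  intro O Δ act Stab
  have hO : O = fun v => Ov v := rfl
  have hΔ : Δ = {S | ∃ v : Fin 2 → F, v ≠ 0 ∧ S = Ov v} := rfl
  have hact : ∀ g (S : Set (Fin 2 → F)),
      act g S = (fun v => Matrix.vecMul v (g : Matrix (Fin 2) (Fin 2) F)) '' S := fun _ _ => rfl
  have hactO : ∀ (g : Matrix.SpecialLinearGroup (Fin 2) F) (v : Fin 2 → F),
      act g (Ov v) = Ov (Matrix.vecMul v (g : Matrix (Fin 2) (Fin 2) F)) := by
    intro g v; rw [hact]; exact image_Ov _ v
  -- the -1 facts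
  have hnsq : ¬ IsSquare (-1 : F) := by
    rw [FiniteField.isSquare_neg_one_iff]
    simp [hq]
  have hm1 : (-1 : F) ≠ 0 := by
    intro h
    exact hnsq (h ▸ (IsSquare.zero (α := F)))
  have hsq_or : ∀ a : F, a ≠ 0 → (∃ t : F, t ≠ 0 ∧ t ^ 2 = a) ∨ (∃ t : F, t ≠ 0 ∧ t ^ 2 = -a) := by
    intro a ha
    by_cases h : IsSquare a
    · obtain ⟨r, hr⟩ := h
      refine Or.inl ⟨r, fun h0 => ha (by simp [hr, h0]), by rw [sq]; exact hr.symm⟩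
    · have h1 : quadraticChar F (-a) = 1 := by
        have hc : quadraticChar F (-a) = quadraticChar F (-1) * quadraticChar F a := by
          rw [← map_mul]; ring_nf
        rw [hc, quadraticChar_neg_one_iff_not_isSquare.mpr hnsq,
          quadraticChar_neg_one_iff_not_isSquare.mpr h]
        ring
      have h2 : IsSquare (-a) := (quadraticChar_one_iff_isSquare (neg_ne_zero.mpr ha)).mp h1
      obtain ⟨r, hr⟩ := h2
      refine Or.inr ⟨r, fun h0 => (neg_ne_zero.mpr ha) (by simp [hr, h0]), by rw [sq]; exact hr.symm⟩
  -- Stabilizer characterization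
  have hStabIff : ∀ g : Matrix.SpecialLinearGroup (Fin 2) F,
      g ∈ Stab ↔ ∃ x y : F, x ≠ 0 ∧
        (g : Matrix (Fin 2) (Fin 2) F) = !![x ^ 2, 0; y, (x ^ 2)⁻¹] := by
    intro g
    have hmem : g ∈ Stab ↔ act g (Ov ![1, 0]) = Ov ![1, 0] := Iff.rfl
    rw [hmem, hactO]
    set M : Matrix (Fin 2) (Fin 2) F := (g : Matrix (Fin 2) (Fin 2) F) with hM
    have hrow : Matrix.vecMul ![1, 0] M = ![M 0 0, M 0 1] := by
      rw [Matrix.eta_fin_two M, vecMul_fin2, Matrix.eta_fin_two M]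
      simp
    have hdet : M.det = 1 := g.2
    rw [hrow]
    constructor
    · intro h
      obtain ⟨x, hx, hxe⟩ := (Ov_eq_iff _ _).mp h.symm
      rw [smul_fin2, fin2_eq_iff] at hxe
      obtain ⟨h00, h01⟩ := hxe
      rw [mul_one] at h00
      rw [mul_zero] at h01
      have hd : M 0 0 * M 1 1 - M 0 1 * M 1 0 = 1 := by
        rw [← Matrix.det_fin_two]; exact hdet
      rw [← h00, ← h01] at hd
      have h11 : M 1 1 = (x ^ 2)⁻¹ := by
        have hx2 : (x : F) ^ 2 ≠ 0 := pow_ne_zero 2 hx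
        field_simp
        linear_combination hd
      refine ⟨x, M 1 0, hx, ?_⟩
      ext i j
      fin_cases i <;> fin_cases j
      · simpa using h00.symm
      · simpa using h01.symm
      · simp
      · simpa using h11
    · rintro ⟨x, y, hx, hgm⟩
      rw [hgm]
      have e0 : (!![x ^ 2, 0; y, (x ^ 2)⁻¹] : Matrix (Fin 2) (Fin 2) F) 0 0 = x ^ 2 := by simp
      have e1 : (!![x ^ 2, 0; y, (x ^ 2)⁻¹] : Matrix (Fin 2) (Fin 2) F) 0 1 = 0 := by simp
      rw [e0, e1]
      refine (Ov_eq_of _ _ x hx ?_).symm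
      rw [smul_fin2, fin2_eq_iff]
      constructor <;> ring
  -- orbit description
  have horbit : ∀ a b : F,
      {U | ∃ g ∈ Stab, act g (Ov ![a, b]) = U} =
        {U | ∃ x y : F, x ≠ 0 ∧ Ov ![a * x ^ 2 + b * y, b * (x ^ 2)⁻¹] = U} := by
    intro a b
    ext U
    simp only [Set.mem_setOf_eq]
    constructor
    · rintro ⟨g, hg, rfl⟩
      obtain ⟨x, y, hx, hgm⟩ := (hStabIff g).mp hg
      refine ⟨x, y, hx, ?_⟩
      rw [hactO, hgm, vecMul_fin2]
      apply congrArg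
      rw [fin2_eq_iff]
      exact ⟨by ring, by ring⟩
    · rintro ⟨x, y, hx, rfl⟩
      have hx2 : (x : F) ^ 2 ≠ 0 := pow_ne_zero 2 hx
      refine ⟨⟨!![x ^ 2, 0; y, (x ^ 2)⁻¹],
        by rw [Matrix.det_fin_two_of]; simp [mul_inv_cancel₀ hx2]⟩,
        (hStabIff _).mpr ⟨x, y, hx, rfl⟩, ?_⟩
      refine (hactO _ _).trans ?_
      show Ov (Matrix.vecMul ![a, b] !![x ^ 2, 0; y, (x ^ 2)⁻¹]) = _
      rw [vecMul_fin2]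
      apply congrArg
      rw [fin2_eq_iff]
      exact ⟨by ring, by ring⟩
  -- orbit when second coordinate is zero
  have hb0 : ∀ a : F, a ≠ 0 →
      {U | ∃ g ∈ Stab, act g (Ov ![a, 0]) = U} = {Ov ![a, 0]} := by
    intro a ha
    rw [horbit]
    ext U
    simp only [Set.mem_setOf_eq, Set.mem_singleton_iff]
    constructor
    · rintro ⟨x, y, hx, rfl⟩
      exact (Ov_eq_of ![a, 0] _ x hx (by rw [smul_fin2, fin2_eq_iff]; exact ⟨by ring, by ring⟩)).symm
    · rintro rfl
      refine ⟨1, 0, one_ne_zero, ?_⟩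
      apply congrArg
      rw [fin2_eq_iff]
      exact ⟨by ring, by ring⟩
  -- orbit when second coordinate is a nonzero square
  have hbs : ∀ a t : F, t ≠ 0 →
      {U | ∃ g ∈ Stab, act g (Ov ![a, t ^ 2]) = U} = {U | ∃ c : F, U = Ov ![c, 1]} := by
    intro a t ht
    rw [horbit]
    ext U
    simp only [Set.mem_setOf_eq]
    constructor
    · rintro ⟨x, y, hx, rfl⟩
      refine ⟨(a * x ^ 2 + t ^ 2 * y) * ((t * x⁻¹) ^ 2)⁻¹, ?_⟩
      have h2 : t ^ 2 * (x ^ 2)⁻¹ = (t * x⁻¹) ^ 2 := by rw [mul_pow, inv_pow]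
      rw [h2, Ov_snd' _ _ (mul_ne_zero ht (inv_ne_zero hx))]
    · rintro ⟨c, rfl⟩
      have ht2 : t ^ 2 ≠ 0 := pow_ne_zero 2 ht
      refine ⟨1, (c * t ^ 2 - a) / t ^ 2, one_ne_zero, ?_⟩
      have e1 : a * (1 : F) ^ 2 + t ^ 2 * ((c * t ^ 2 - a) / t ^ 2) = c * t ^ 2 := by
        field_simp
        ring
      have e2 : t ^ 2 * ((1 : F) ^ 2)⁻¹ = t ^ 2 := by norm_num
      rw [e1, e2, Ov_snd' _ _ ht]
      apply congrArg
      rw [fin2_eq_iff]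
      refine ⟨?_, rfl⟩
      field_simp
  -- orbit when second coordinate is minus a nonzero square
  have hbn : ∀ a t : F, t ≠ 0 →
      {U | ∃ g ∈ Stab, act g (Ov ![a, -t ^ 2]) = U} = {U | ∃ c : F, U = Ov ![c, -1]} := by
    intro a t ht
    rw [horbit]
    ext U
    simp only [Set.mem_setOf_eq]
    constructor
    · rintro ⟨x, y, hx, rfl⟩
      refine ⟨(a * x ^ 2 + -t ^ 2 * y) * ((t * x⁻¹) ^ 2)⁻¹, ?_⟩
      have h2 : -t ^ 2 * (x ^ 2)⁻¹ = -(t * x⁻¹) ^ 2 := by rw [mul_pow, inv_pow]; ring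
      rw [h2, Ov_snd'' _ _ (mul_ne_zero ht (inv_ne_zero hx))]
    · rintro ⟨c, rfl⟩
      have ht2 : t ^ 2 ≠ 0 := pow_ne_zero 2 ht
      refine ⟨1, (a - c * t ^ 2) / t ^ 2, one_ne_zero, ?_⟩
      have e1 : a * (1 : F) ^ 2 + -t ^ 2 * ((a - c * t ^ 2) / t ^ 2) = c * t ^ 2 := by
        field_simp; ring
      have e2 : -t ^ 2 * ((1 : F) ^ 2)⁻¹ = -t ^ 2 := by norm_num
      rw [e1, e2, Ov_snd'' _ _ ht]
      apply congrArg
      rw [fin2_eq_iff]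
      refine ⟨?_, rfl⟩
      field_simp
  -- the main orbit set equality
  have hmain : {T : Set (Set (Fin 2 → F)) | ∃ S ∈ Δ, T = {U | ∃ g ∈ Stab, act g S = U}} =
      {{Ov ![1, 0]}, {Ov ![-1, 0]}, {U | ∃ a : F, U = Ov ![a, 1]},
        {U | ∃ a : F, U = Ov ![a, -1]}} := by
    apply Set.eq_of_subset_of_subset
    · rintro T ⟨S, hS, rfl⟩
      rw [hΔ] at hS
      obtain ⟨v, hv, rfl⟩ := hS
      have hv2 : v = ![v 0, v 1] := by funext i; fin_cases i <;> rfl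
      set a := v 0 with ha'
      set b := v 1 with hb'
      rw [hv2]
      simp only [Set.mem_insert_iff, Set.mem_singleton_iff]
      by_cases hb : b = 0
      · have ha : a ≠ 0 := by
          intro h0
          apply hv
          rw [hv2, hb, h0]
          funext i; fin_cases i <;> rfl
        rw [hb, hb0 a ha]
        rcases hsq_or a ha with ⟨t, ht, hta⟩ | ⟨t, ht, hta⟩
        · have he : Ov ![a, 0] = Ov ![1, 0] :=
            (Ov_eq_of ![1, 0] _ t ht (by
              rw [smul_fin2, fin2_eq_iff]
              exact ⟨by rw [mul_one, hta], by ring⟩)).symm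
          rw [he]
          exact Or.inl rfl
        · have he : Ov ![a, 0] = Ov ![-1, 0] :=
            (Ov_eq_of ![-1, 0] _ t ht (by
              rw [smul_fin2, fin2_eq_iff]
              exact ⟨by linear_combination -hta, by ring⟩)).symm
          rw [he]
          exact Or.inr (Or.inl rfl)
      · rcases hsq_or b hb with ⟨t, ht, htb⟩ | ⟨t, ht, htb⟩
        · rw [← htb, hbs a t ht]
          exact Or.inr (Or.inr (Or.inl rfl))
        · have hbneg : b = -t ^ 2 := by linear_combination htb
          rw [hbneg, hbn a t ht]
          exact Or.inr (Or.inr (Or.inr rfl))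
    · intro T hT
      simp only [Set.mem_insert_iff, Set.mem_singleton_iff] at hT
      simp only [Set.mem_setOf_eq]
      rw [hΔ]
      rcases hT with rfl | rfl | rfl | rfl
      · exact ⟨Ov ![1, 0], ⟨![1, 0], fin2_ne_zero_left one_ne_zero, rfl⟩,
          (hb0 1 one_ne_zero).symm⟩
      · exact ⟨Ov ![-1, 0], ⟨![-1, 0], fin2_ne_zero_left hm1, rfl⟩,
          (hb0 (-1) hm1).symm⟩
      · refine ⟨Ov ![0, 1], ⟨![0, 1], fin2_ne_zero_right one_ne_zero, rfl⟩, ?_⟩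
        have h := hbs 0 1 one_ne_zero
        rw [one_pow] at h
        exact h.symm
      · refine ⟨Ov ![0, -1], ⟨![0, -1], fin2_ne_zero_right hm1, rfl⟩, ?_⟩
        have h := hbn 0 1 one_ne_zero
        rw [one_pow] at h
        exact h.symm
  -- cardinalities
  have hncard1 : Set.ncard {U : Set (Fin 2 → F) | ∃ a : F, U = Ov ![a, 1]} = Fintype.card F := by
    have hinj : Function.Injective (fun a : F => Ov ![a, (1 : F)]) := by
      intro a b h
      simp only at h
      obtain ⟨x, hx, hxe⟩ := (Ov_eq_iff _ _).mp h
      rw [smul_fin2, fin2_eq_iff] at hxe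
      obtain ⟨h1, h2⟩ := hxe
      rw [mul_one] at h2
      rw [← h1, h2, one_mul]
    have hrange : {U : Set (Fin 2 → F) | ∃ a : F, U = Ov ![a, 1]} =
        Set.range (fun a : F => Ov ![a, (1 : F)]) := by
      ext U
      constructor
      · rintro ⟨a, rfl⟩; exact ⟨a, rfl⟩
      · rintro ⟨a, rfl⟩; exact ⟨a, rfl⟩
    rw [hrange, ← Set.image_univ, Set.ncard_image_of_injective _ hinj, Set.ncard_univ,
      Nat.card_eq_fintype_card]
  have hncard2 : Set.ncard {U : Set (Fin 2 → F) | ∃ a : F, U = Ov ![a, -1]} = Fintype.card F := by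
    have hinj : Function.Injective (fun a : F => Ov ![a, (-1 : F)]) := by
      intro a b h
      simp only at h
      obtain ⟨x, hx, hxe⟩ := (Ov_eq_iff _ _).mp h
      rw [smul_fin2, fin2_eq_iff] at hxe
      obtain ⟨h1, h2⟩ := hxe
      have hx2 : x ^ 2 = 1 := by linear_combination -h2
      rw [hx2, one_mul] at h1
      exact h1
    have hrange : {U : Set (Fin 2 → F) | ∃ a : F, U = Ov ![a, -1]} =
        Set.range (fun a : F => Ov ![a, (-1 : F)]) := by
      ext U
      constructor
      · rintro ⟨a, rfl⟩; exact ⟨a, rfl⟩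
      · rintro ⟨a, rfl⟩; exact ⟨a, rfl⟩
    rw [hrange, ← Set.image_univ, Set.ncard_image_of_injective _ hinj, Set.ncard_univ,
      Nat.card_eq_fintype_card]
  simp only [hO]
  exact ⟨hStabIff, hmain, Set.ncard_singleton _, Set.ncard_singleton _, hncard1, hncard2⟩
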